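/- Let 0 < p, q ≤ ∞ and suppose either s > 1, or s = 1 and q < ∞. If f : ℝ → ℝ is continuously differentiable and the dyadic Besov quantity ‖f‖_{B^{s,dyad}_{p,q}} := (Σ_{j≥0} [2^{j(s-1/p)} (Σ_{μ∈ℤ} |2^j ∫ f h_{j,μ} dx|^p)^{1/p}]^q)^{1/q} is finite, then f is constant. -/

import Mathlib

open MeasureTheory Real
open scoped ENNReal

/-- The Haar mother function `h = 𝟙_{[0,1/2)} - 𝟙_{[1/2,1)}`. -/
noncomputable def haar (x : ℝ) : ℝ :=
  if 0 ≤ x ∧ x < 1/2 then 1 else if 1/2 ≤ x ∧ x < 1 then -1 else 0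

/-- The inner `ℓ^p`-norm (over `ℤ`), with sup-modification for `p = ∞`. -/
noncomputable def seqNormP (p : ℝ≥0∞) (b : ℤ → ℝ) : ℝ≥0∞ :=
  if p = ∞ then ⨆ μ : ℤ, (‖b μ‖₊ : ℝ≥0∞)
  else (∑' μ : ℤ, (‖b μ‖₊ : ℝ≥0∞) ^ p.toReal) ^ (1 / p.toReal)

/-- The `b^s_{p,q}` quasi-norm, with sup-modifications when `p` or `q` is `∞`. -/
noncomputable def bNorm (s : ℝ) (p q : ℝ≥0∞) (a : ℕ → ℤ → ℝ) : ℝ≥0∞ :=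
  if q = ∞ then
    ⨆ j : ℕ, ENNReal.ofReal ((2:ℝ) ^ ((j:ℝ) * (s - 1 / p.toReal))) * seqNormP p (a j)
  else
    (∑' j : ℕ, (ENNReal.ofReal ((2:ℝ) ^ ((j:ℝ) * (s - 1 / p.toReal))) * seqNormP p (a j))
      ^ q.toReal) ^ (1 / q.toReal)

/-! ### Auxiliary lemmas -/

lemma haar_mul_eq (f : ℝ → ℝ) {T : ℝ} (hT : 0 < T) (μ : ℝ) (x : ℝ) :
    f x * haar (T * x - μ) =
      Set.indicator (Set.Ico (μ/T) ((μ+1/2)/T)) f x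
        - Set.indicator (Set.Ico ((μ+1/2)/T) ((μ+1)/T)) f x := by
  have e1 : μ/T ≤ x ↔ 0 ≤ T*x - μ := by
    rw [div_le_iff₀ hT]; constructor <;> intro h <;> nlinarith
  have e2 : x < (μ+1/2)/T ↔ T*x - μ < 1/2 := by
    rw [lt_div_iff₀ hT]; constructor <;> intro h <;> nlinarith
  have e3 : (μ+1/2)/T ≤ x ↔ 1/2 ≤ T*x - μ := by
    rw [div_le_iff₀ hT]; constructor <;> intro h <;> nlinarith
  have e4 : x < (μ+1)/T ↔ T*x - μ < 1 := by
    rw [lt_div_iff₀ hT]; constructor <;> intro h <;> nlinarith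
  simp only [haar, Set.indicator_apply, Set.mem_Ico, e1, e2, e3, e4]
  split_ifs <;> simp_all <;> linarith

lemma integral_haar_mul (f : ℝ → ℝ) (hf : Continuous f) {T : ℝ} (hT : 0 < T) (μ : ℝ) :
    ∫ x, f x * haar (T * x - μ)
      = (∫ x in (μ/T)..((μ+1/2)/T), f x) - ∫ x in ((μ+1/2)/T)..((μ+1)/T), f x := by
  have key : ∀ a b : ℝ, a ≤ b →
      (∫ x, Set.indicator (Set.Ico a b) f x) = ∫ x in a..b, f x := by
    intro a b hab
    rw [integral_indicator measurableSet_Ico, integral_Ico_eq_integral_Ioo,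
      intervalIntegral.integral_of_le hab, integral_Ioc_eq_integral_Ioo]
  have hi : ∀ a b : ℝ, Integrable (Set.indicator (Set.Ico a b) f) := by
    intro a b
    rw [integrable_indicator_iff measurableSet_Ico]
    exact (hf.integrableOn_Icc).mono_set Set.Ico_subset_Icc_self
  have h1 : μ/T ≤ (μ+1/2)/T := by
    apply div_le_div_of_nonneg_right ?_ hT.le <;> linarith
  have h2 : (μ+1/2)/T ≤ (μ+1)/T := by
    apply div_le_div_of_nonneg_right ?_ hT.le <;> linarith
  calc ∫ x, f x * haar (T * x - μ)
      = ∫ x, (Set.indicator (Set.Ico (μ/T) ((μ+1/2)/T)) f x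
        - Set.indicator (Set.Ico ((μ+1/2)/T) ((μ+1)/T)) f x) := by
        congr 1; funext x; exact haar_mul_eq f hT μ x
    _ = _ := by
        rw [integral_sub (hi _ _) (hi _ _), key _ _ h1, key _ _ h2]

lemma step_bound (f : ℝ → ℝ) (hf : ContDiff ℝ 1 f) {c : ℝ} (a h : ℝ) (hh : 0 < h)
    (hder : ∀ t ∈ Set.Icc a (a+h+h), c ≤ deriv f t) :
    (∫ x in a..(a+h), f x) - (∫ x in (a+h)..(a+h+h), f x) ≤ -(c*h)*h := by
  have hfc : Continuous f := hf.continuous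
  have hdc : Continuous (deriv f) := hf.continuous_deriv le_rfl
  have hsub : ∀ x ∈ Set.Icc a (a+h), f x - f (x+h) ≤ -(c*h) := by
    intro x hx
    have hxIcc : Set.Icc x (x+h) ⊆ Set.Icc a (a+h+h) :=
      Set.Icc_subset_Icc hx.1 (by linarith [hx.2])
    have hftc : f (x+h) - f x = ∫ t in x..(x+h), deriv f t := by
      rw [intervalIntegral.integral_deriv_eq_sub
        (fun t _ => (hf.differentiable one_ne_zero).differentiableAt)
        (hdc.intervalIntegrable _ _)]
    have hmono : (∫ t in x..(x+h), (c:ℝ)) ≤ ∫ t in x..(x+h), deriv f t :=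
      intervalIntegral.integral_mono_on (by linarith)
        intervalIntegrable_const (hdc.intervalIntegrable _ _)
        (fun t ht => hder t (hxIcc ht))
    rw [intervalIntegral.integral_const, smul_eq_mul] at hmono
    have h2 : c * h ≤ f (x+h) - f x := by
      rw [hftc]
      calc c*h = (x+h-x)*c := by ring
        _ ≤ _ := hmono
    linarith
  have hint : (∫ x in a..(a+h), (f x - f (x+h))) ≤ -(c*h)*h := by
    have h3 := intervalIntegral.integral_mono_on (a := a) (b := a+h) (μ := volume)
      (f := fun x => f x - f (x+h)) (g := fun _ => -(c*h)) (by linarith)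
      ((hfc.sub (hfc.comp (continuous_id.add continuous_const))).intervalIntegrable _ _)
      intervalIntegrable_const
      (fun x hx => hsub x hx)
    rw [intervalIntegral.integral_const, smul_eq_mul] at h3
    calc (∫ x in a..(a+h), (f x - f (x+h))) ≤ (a+h-a) * -(c*h) := h3
      _ = -(c*h)*h := by ring
  have hsplit : (∫ x in a..(a+h), (f x - f (x+h)))
      = (∫ x in a..(a+h), f x) - ∫ x in a..(a+h), f (x+h) :=
    intervalIntegral.integral_sub (hfc.intervalIntegrable _ _)
      ((hfc.comp (continuous_id.add continuous_const)).intervalIntegrable _ _)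
  have hshift : (∫ x in a..(a+h), f (x+h)) = ∫ x in (a+h)..(a+h+h), f x := by
    rw [intervalIntegral.integral_comp_add_right]
  rw [← hshift, ← hsplit]
  exact hint

lemma coeff_le (f : ℝ → ℝ) (hf : ContDiff ℝ 1 f) {c : ℝ}
    {T : ℝ} (hT : 0 < T) (μ : ℝ)
    (hder : ∀ t ∈ Set.Icc (μ/T) ((μ+1)/T), c ≤ deriv f t) :
    (∫ x, f x * haar (T * x - μ)) ≤ -(c/(4*T^2)) := by
  have hT0 : T ≠ 0 := hT.ne'
  have hb : (μ+1/2)/T = μ/T + 1/(2*T) := by field_simp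
  have hd : (μ+1)/T = μ/T + 1/(2*T) + 1/(2*T) := by field_simp; ring
  have hhpos : 0 < 1/(2*T) := by positivity
  have := step_bound f hf (μ/T) (1/(2*T)) hhpos (by rw [← hd]; exact hder)
  rw [integral_haar_mul f hf.continuous hT μ, hb, hd]
  calc _ ≤ -(c*(1/(2*T)))*(1/(2*T)) := this
    _ = -(c/(4*T^2)) := by ring

lemma coeff_abs (f : ℝ → ℝ) (hf : ContDiff ℝ 1 f) {c : ℝ} (hc : 0 < c)
    (J : ℕ) (m : ℤ)
    (hder : ∀ t ∈ Set.Icc ((m:ℝ)/2^J) (((m:ℝ)+1)/2^J), c ≤ deriv f t)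
    (j : ℕ) (hj : J ≤ j) (μ : ℤ) (h1 : m * 2^(j-J) ≤ μ) (h2 : μ + 1 ≤ (m+1) * 2^(j-J)) :
    c/(4*2^j) ≤ |2 ^ j * ∫ x : ℝ, f x * haar (2 ^ j * x - (μ : ℝ))| := by
  have hT : (0:ℝ) < 2^j := by positivity
  have hJ : (0:ℝ) < 2^J := by positivity
  have h2J : ((2:ℝ)^(j-J)) * 2^J = 2^j := by
    rw [← pow_add]; congr 1; omega
  have h1' : (m:ℝ) * 2^(j-J) ≤ (μ:ℝ) := by exact_mod_cast h1
  have h2' : (μ:ℝ) + 1 ≤ ((m:ℝ)+1) * 2^(j-J) := by exact_mod_cast h2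
  have hsub : Set.Icc ((μ:ℝ)/2^j) (((μ:ℝ)+1)/2^j) ⊆ Set.Icc ((m:ℝ)/2^J) (((m:ℝ)+1)/2^J) := by
    apply Set.Icc_subset_Icc
    · rw [div_le_div_iff₀ hJ hT, ← h2J]; nlinarith
    · rw [div_le_div_iff₀ hT hJ, ← h2J]; nlinarith
  have hder' : ∀ t ∈ Set.Icc ((μ:ℝ)/2^j) (((μ:ℝ)+1)/2^j), c ≤ deriv f t :=
    fun t ht => hder t (hsub ht)
  have hle := coeff_le f hf hT (μ:ℝ) hder'
  have key : (2:ℝ)^j * ∫ x : ℝ, f x * haar (2 ^ j * x - (μ : ℝ)) ≤ -(c/(4*2^j)) := by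
    calc (2:ℝ)^j * ∫ x : ℝ, f x * haar (2 ^ j * x - (μ : ℝ))
        ≤ 2^j * -(c/(4*((2:ℝ)^j)^2)) := by
          apply mul_le_mul_of_nonneg_left hle hT.le
      _ = -(c/(4*2^j)) := by field_simp
  have hpos : 0 < c/(4*(2:ℝ)^j) := by positivity
  rw [abs_of_nonpos (by linarith : (2:ℝ)^j * (∫ x : ℝ, f x * haar (2^j * x - (μ:ℝ))) ≤ 0)]
  linarith

lemma term_lower (p : ℝ≥0∞) (hp : 0 < p) (s : ℝ) {c : ℝ} (hc : 0 < c) (J : ℕ) (m : ℤ)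
    (a : ℕ → ℤ → ℝ)
    (hco : ∀ j, J ≤ j → ∀ μ : ℤ, m * 2^(j-J) ≤ μ → μ + 1 ≤ (m+1) * 2^(j-J) →
      c/(4*2^j) ≤ |a j μ|) :
    ∃ K : ℝ, 0 < K ∧ ∀ j, J ≤ j →
      ENNReal.ofReal (K * (2:ℝ)^((j:ℝ)*(s-1)))
        ≤ ENNReal.ofReal ((2:ℝ)^((j:ℝ)*(s-1/p.toReal))) * seqNormP p (a j) := by
  have h2 : (0:ℝ) < 2 := two_pos
  have hεle : ∀ j, J ≤ j → ∀ μ : ℤ, m * 2^(j-J) ≤ μ → μ + 1 ≤ (m+1) * 2^(j-J) →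
      ENNReal.ofReal (c/(4*2^j)) ≤ (‖a j μ‖₊ : ℝ≥0∞) := by
    intro j hj μ h1 h2'
    rw [show (‖a j μ‖₊ : ℝ≥0∞) = ‖a j μ‖ₑ from rfl, Real.enorm_eq_ofReal_abs]
    exact ENNReal.ofReal_le_ofReal (hco j hj μ h1 h2')
  have h2k1 : ∀ k : ℕ, (1:ℤ) ≤ 2^k := fun k => one_le_pow₀ one_le_two
  by_cases hptop : p = ∞
  · subst hptop
    refine ⟨c/4, by positivity, fun j hj => ?_⟩
    have hμ0 : m * 2^(j-J) + 1 ≤ (m+1) * 2^(j-J) := by nlinarith [h2k1 (j-J)]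
    have hε := hεle j hj (m * 2^(j-J)) le_rfl hμ0
    rw [seqNormP, if_pos rfl]
    have hreal : c/4 * (2:ℝ)^((j:ℝ)*(s-1)) = (2:ℝ)^((j:ℝ)*(s-1/(⊤:ℝ≥0∞).toReal)) * (c/(4*2^j)) := by
      rw [ENNReal.toReal_top]
      have hh : (2:ℝ)^((j:ℝ)*(s-1)) = (2:ℝ)^((j:ℝ)*(s-1/0)) * ((2:ℝ)^(j:ℕ))⁻¹ := by
        rw [← Real.rpow_natCast 2 j, ← Real.rpow_neg h2.le, ← Real.rpow_add h2]
        congr 1; simp; ring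
      rw [hh]; field_simp
    rw [hreal, ENNReal.ofReal_mul (by positivity)]
    exact mul_le_mul' le_rfl (le_trans hε (le_iSup (fun μ : ℤ => (‖a j μ‖₊ : ℝ≥0∞)) _))
  · set pr := p.toReal with hpr
    have hprpos : 0 < pr := ENNReal.toReal_pos hp.ne' hptop
    refine ⟨c/4 * (2:ℝ)^(-(J:ℝ)/pr), by positivity, fun j hj => ?_⟩
    rw [seqNormP, if_neg hptop]
    set S : Finset ℤ := Finset.Ico (m * 2^(j-J)) ((m+1) * 2^(j-J)) with hS
    have hcard : S.card = 2^(j-J) := by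
      rw [hS, Int.card_Ico]
      have : (m+1) * 2^(j-J) - m * 2^(j-J) = ((2^(j-J) : ℕ) : ℤ) := by push_cast; ring
      rw [this, Int.toNat_natCast]
    set ε : ℝ≥0∞ := ENNReal.ofReal (c/(4*2^j)) with hε
    have hsum : (S.card : ℝ≥0∞) * ε ^ pr ≤ ∑' μ : ℤ, (‖a j μ‖₊ : ℝ≥0∞) ^ pr := by
      calc (S.card : ℝ≥0∞) * ε ^ pr = ∑ μ ∈ S, ε ^ pr := by
            rw [Finset.sum_const, nsmul_eq_mul]
        _ ≤ ∑ μ ∈ S, (‖a j μ‖₊ : ℝ≥0∞) ^ pr := by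
            apply Finset.sum_le_sum
            intro μ hμ
            rw [hS, Finset.mem_Ico] at hμ
            exact ENNReal.rpow_le_rpow
              (hεle j hj μ hμ.1 (by omega)) hprpos.le
        _ ≤ _ := ENNReal.sum_le_tsum S
    have hmono : ((S.card : ℝ≥0∞) * ε ^ pr) ^ (1/pr)
        ≤ (∑' μ : ℤ, (‖a j μ‖₊ : ℝ≥0∞) ^ pr) ^ (1/pr) :=
      ENNReal.rpow_le_rpow hsum (by positivity)
    have hsimp : ((S.card : ℝ≥0∞) * ε ^ pr) ^ (1/pr)
        = (S.card : ℝ≥0∞) ^ (1/pr) * ε := by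
      rw [ENNReal.mul_rpow_of_nonneg _ _ (by positivity), ← ENNReal.rpow_mul,
        mul_one_div_cancel hprpos.ne', ENNReal.rpow_one]
    have hcard' : (S.card : ℝ≥0∞) ^ (1/pr) = ENNReal.ofReal (((2:ℝ)^(j-J:ℕ)) ^ (1/pr)) := by
      rw [hcard, ← ENNReal.ofReal_natCast, ENNReal.ofReal_rpow_of_pos (by positivity)]
      push_cast
      norm_num
    calc ENNReal.ofReal ((c/4 * (2:ℝ)^(-(J:ℝ)/pr)) * (2:ℝ)^((j:ℝ)*(s-1)))
        = ENNReal.ofReal ((2:ℝ)^((j:ℝ)*(s-1/pr))) *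
            (ENNReal.ofReal (((2:ℝ)^(j-J:ℕ)) ^ (1/pr)) * ε) := by
          rw [hε, ← ENNReal.ofReal_mul (by positivity), ← ENNReal.ofReal_mul (by positivity)]
          congr 1
          have hjJ : (((j-J:ℕ)):ℝ) = (j:ℝ) - J := by
            push_cast [Nat.cast_sub hj]; ring
          rw [← Real.rpow_natCast 2 (j-J), ← Real.rpow_natCast 2 j,
            ← Real.rpow_mul h2.le, hjJ]
          rw [show c/(4*(2:ℝ)^((j:ℝ))) = c/4 * (2:ℝ)^(-(j:ℝ)) by
            rw [Real.rpow_neg h2.le]; field_simp]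
          rw [show (2:ℝ)^((j:ℝ)*(s-1/pr)) * ((2:ℝ)^(((j:ℝ)-J)*(1/pr)) * (c/4 * (2:ℝ)^(-(j:ℝ))))
              = c/4 * ((2:ℝ)^((j:ℝ)*(s-1/pr)) * (2:ℝ)^(((j:ℝ)-J)*(1/pr)) * (2:ℝ)^(-(j:ℝ))) by ring]
          rw [← Real.rpow_add h2, ← Real.rpow_add h2]
          rw [show (c/4 * (2:ℝ)^(-(J:ℝ)/pr)) * (2:ℝ)^((j:ℝ)*(s-1))
              = c/4 * ((2:ℝ)^(-(J:ℝ)/pr) * (2:ℝ)^((j:ℝ)*(s-1))) by ring, ← Real.rpow_add h2]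
          congr 1
          field_simp
          ring
      _ ≤ _ := by
          apply mul_le_mul' le_rfl
          rw [← hcard', ← hsimp]
          exact hmono

lemma bNorm_top (p q : ℝ≥0∞) (hq : 0 < q) (s : ℝ) (hs : 1 < s ∨ (s = 1 ∧ q ≠ ∞))
    (a : ℕ → ℤ → ℝ) (K : ℝ) (hK : 0 < K) (J : ℕ)
    (hbd : ∀ j, J ≤ j → ENNReal.ofReal (K * (2:ℝ)^((j:ℝ)*(s-1)))
      ≤ ENNReal.ofReal ((2:ℝ)^((j:ℝ)*(s-1/p.toReal))) * seqNormP p (a j)) :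
    bNorm s p q a = ∞ := by
  have h2 : (1:ℝ) < 2 := one_lt_two
  set T : ℕ → ℝ≥0∞ :=
    fun j => ENNReal.ofReal ((2:ℝ)^((j:ℝ)*(s-1/p.toReal))) * seqNormP p (a j) with hT
  by_cases hqtop : q = ∞
  · subst hqtop
    have hs1 : 1 < s := by
      rcases hs with h | ⟨_, h⟩
      · exact h
      · exact absurd rfl h
    rw [bNorm, if_pos rfl]
    by_contra hne
    have hub : ∀ j, J ≤ j → K * (2:ℝ)^((j:ℝ)*(s-1)) ≤ (⨆ j : ℕ, T j).toReal := by
      intro j hj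
      exact (ENNReal.ofReal_le_iff_le_toReal hne).1 ((hbd j hj).trans (le_iSup T j))
    set y : ℝ := (2:ℝ)^(s-1) with hy
    have hy1 : 1 < y := by
      rw [hy, show (1:ℝ) = (2:ℝ)^(0:ℝ) by simp]
      exact Real.rpow_lt_rpow_of_exponent_lt h2 (by linarith)
    obtain ⟨n, hn⟩ := pow_unbounded_of_one_lt ((⨆ j : ℕ, T j).toReal/K) hy1
    have hpow : y ^ n = (2:ℝ)^((n:ℝ)*(s-1)) := by
      rw [hy, ← Real.rpow_natCast ((2:ℝ)^(s-1)) n, ← Real.rpow_mul (by norm_num), mul_comm]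
    have hmono2 : (2:ℝ)^((n:ℝ)*(s-1)) ≤ (2:ℝ)^(((n+J:ℕ):ℝ)*(s-1)) := by
      apply Real.rpow_le_rpow_of_exponent_le h2.le
      push_cast
      nlinarith [Nat.cast_nonneg (α := ℝ) J]
    have hlt : (⨆ j : ℕ, T j).toReal < K * y^n := by
      rw [div_lt_iff₀ hK] at hn; linarith
    have := hub (n+J) (by omega)
    rw [← hpow] at hmono2
    nlinarith
  · rw [bNorm, if_neg hqtop]
    have hqr : 0 < q.toReal := ENNReal.toReal_pos hq.ne' hqtop
    have hs1 : 1 ≤ s := by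
      rcases hs with h | ⟨h, _⟩
      · exact h.le
      · exact h.ge
    have hone : ∀ j, J ≤ j → ENNReal.ofReal K ≤ T j := by
      intro j hj
      refine le_trans ?_ (hbd j hj)
      apply ENNReal.ofReal_le_ofReal
      have h1 : (1:ℝ) ≤ (2:ℝ)^((j:ℝ)*(s-1)) := by
        rw [show (1:ℝ) = (2:ℝ)^(0:ℝ) by simp]
        apply Real.rpow_le_rpow_of_exponent_le h2.le
        exact mul_nonneg (Nat.cast_nonneg j) (by linarith)
      nlinarith
    set ε : ℝ≥0∞ := (ENNReal.ofReal K)^q.toReal with hε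
    have hεne : ε ≠ 0 := by
      rw [hε]
      simp only [ne_eq, ENNReal.rpow_eq_zero_iff, not_or, not_and]
      constructor
      · intro h; exact absurd h (by simp [hK])
      · intro h; exact absurd h (by simp)
    have htop : (∑' j : ℕ, T j ^ q.toReal) = ⊤ := by
      refine top_le_iff.1 ?_
      calc (⊤:ℝ≥0∞) = ∑' _ : ℕ, ε := (ENNReal.tsum_const_eq_top_of_ne_zero hεne).symm
        _ ≤ ∑' n : ℕ, T (n+J) ^ q.toReal := by
            apply ENNReal.tsum_le_tsum
            intro n
            exact ENNReal.rpow_le_rpow (hone (n+J) (by omega)) hqr.le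
        _ ≤ ∑' j : ℕ, T j ^ q.toReal :=
            ENNReal.tsum_comp_le_tsum_of_injective (add_left_injective J)
              (fun j => T j ^ q.toReal)
    rw [htop]
    exact ENNReal.top_rpow_of_pos (by positivity)

lemma bNorm_key (p q : ℝ≥0∞) (hp : 0 < p) (hq : 0 < q) (s : ℝ)
    (hs : 1 < s ∨ (s = 1 ∧ q ≠ ∞)) (f : ℝ → ℝ) (hf : ContDiff ℝ 1 f)
    {c : ℝ} (hc : 0 < c) (J : ℕ) (m : ℤ)
    (hder : ∀ t ∈ Set.Icc ((m:ℝ)/2^J) (((m:ℝ)+1)/2^J), c ≤ deriv f t) :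
    bNorm s p q (fun j μ => 2 ^ j * ∫ x : ℝ, f x * haar (2 ^ j * x - (μ : ℝ))) = ∞ := by
  obtain ⟨K, hK, hbd⟩ := term_lower p hp s hc J m
    (fun j μ => 2 ^ j * ∫ x : ℝ, f x * haar (2 ^ j * x - (μ : ℝ)))
    (fun j hj μ h1 h2 => coeff_abs f hf hc J m hder j hj μ h1 h2)
  exact bNorm_top p q hq s hs _ K hK J hbd

lemma bNorm_neg (s : ℝ) (p q : ℝ≥0∞) (a : ℕ → ℤ → ℝ) :
    bNorm s p q (fun j μ => -(a j μ)) = bNorm s p q a := by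
  have h : ∀ j, seqNormP p (fun μ => -(a j μ)) = seqNormP p (a j) := by
    intro j; simp [seqNormP, nnnorm_neg]
  simp only [bNorm, h]

/-- If `s > 1`, or `s = 1` and `q < ∞`, then a `C¹` function with finite dyadic Besov
quantity `‖f‖_{B^{s,dyad}_{p,q}}` is constant. -/
theorem constant_of_dyadic_besov (p q : ℝ≥0∞) (hp : 0 < p) (hq : 0 < q) (s : ℝ)
    (hs : 1 < s ∨ (s = 1 ∧ q ≠ ∞)) (f : ℝ → ℝ) (hf : ContDiff ℝ 1 f)
    (hfin : bNorm s p q (fun j μ => 2 ^ j * ∫ x : ℝ, f x * haar (2 ^ j * x - (μ : ℝ))) ≠ ∞) :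
    ∀ x y : ℝ, f x = f y := by
  by_contra hne
  push_neg at hne
  obtain ⟨x, y, hxy⟩ := hne
  have hdiff : Differentiable ℝ f := hf.differentiable one_ne_zero
  have hx0 : ∃ x₀, deriv f x₀ ≠ 0 := by
    by_contra h'
    push_neg at h'
    exact hxy (is_const_of_deriv_eq_zero hdiff h' x y)
  obtain ⟨x₀, hx₀⟩ := hx0
  have hcont : Continuous (deriv f) := hf.continuous_deriv le_rfl
  set c : ℝ := |deriv f x₀| / 2 with hc
  have hcpos : 0 < c := by
    rw [hc]; positivity
  obtain ⟨δ, hδ, hball⟩ := Metric.continuous_iff.mp hcont x₀ c hcpos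
  obtain ⟨J, hJ⟩ := exists_pow_lt_of_lt_one hδ (by norm_num : (1:ℝ)/2 < 1)
  have hJ' : ((2:ℝ)^J)⁻¹ < δ := by
    rw [← one_div]
    calc 1/(2:ℝ)^J = (1/2)^J := by rw [div_pow, one_pow]
      _ < δ := hJ
  set m : ℤ := ⌊(2:ℝ)^J * x₀⌋ with hm
  have hJpos : (0:ℝ) < 2^J := by positivity
  have hm1 : (m:ℝ) ≤ 2^J * x₀ := Int.floor_le _
  have hm2 : 2^J * x₀ < (m:ℝ) + 1 := Int.lt_floor_add_one _
  have hIcc : ∀ t ∈ Set.Icc ((m:ℝ)/2^J) (((m:ℝ)+1)/2^J), dist t x₀ < δ := by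
    intro t ht
    rw [Real.dist_eq, abs_lt]
    obtain ⟨ht1, ht2⟩ := ht
    rw [div_le_iff₀ hJpos] at ht1
    rw [le_div_iff₀ hJpos] at ht2
    have hdJ : 1 < δ * 2^J := by
      calc (1:ℝ) = ((2:ℝ)^J)⁻¹ * 2^J := (inv_mul_cancel₀ hJpos.ne').symm
        _ < δ * 2^J := by exact mul_lt_mul_of_pos_right hJ' hJpos
    constructor
    · nlinarith [hdJ, hJpos]
    · nlinarith [hdJ, hJpos]
  have hclose : ∀ t ∈ Set.Icc ((m:ℝ)/2^J) (((m:ℝ)+1)/2^J), |deriv f t - deriv f x₀| < c := by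
    intro t ht
    have := hball t (hIcc t ht)
    rwa [Real.dist_eq] at this
  rcases lt_or_gt_of_ne hx₀ with hneg | hpos
  · -- deriv f x₀ < 0 : work with -f
    have habs : |deriv f x₀| = -deriv f x₀ := abs_of_neg hneg
    have hder : ∀ t ∈ Set.Icc ((m:ℝ)/2^J) (((m:ℝ)+1)/2^J), c ≤ deriv (fun z => -f z) t := by
      intro t ht
      have h1 := hclose t ht
      rw [abs_lt] at h1
      rw [deriv.fun_neg]
      rw [hc, habs] at *
      linarith [h1.2]
    have htop := bNorm_key p q hp hq s hs (fun z => -f z) hf.neg hcpos J m hder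
    have heq : (fun j (μ:ℤ) => (2:ℝ) ^ j * ∫ x : ℝ, (fun z => -f z) x * haar (2 ^ j * x - (μ : ℝ)))
        = fun j (μ:ℤ) => -((2:ℝ) ^ j * ∫ x : ℝ, f x * haar (2 ^ j * x - (μ : ℝ))) := by
      funext j μ
      have : (fun x => (fun z => -f z) x * haar (2 ^ j * x - (μ : ℝ)))
          = fun x => -(f x * haar (2 ^ j * x - (μ : ℝ))) := by
        funext x; ring
      rw [this, integral_neg]
      ring
    rw [heq, bNorm_neg] at htop
    exact hfin htop
  · have habs : |deriv f x₀| = deriv f x₀ := abs_of_pos hpos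
    have hder : ∀ t ∈ Set.Icc ((m:ℝ)/2^J) (((m:ℝ)+1)/2^J), c ≤ deriv f t := by
      intro t ht
      have h1 := hclose t ht
      rw [abs_lt] at h1
      rw [hc, habs] at *
      linarith [h1.1]
    exact hfin (bNorm_key p q hp hq s hs f hf hcpos J m hder)
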